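/- Every ordered pair of conjugate strings is obtained from the pair ([2],[2]) by a finite sequence of the two steps ([b₁,…,b_r],[c₁,…,c_s]) ↦ ([b₁+1, b₂,…,b_r],[2, c₁,…,c_s]) and ([b₁,…,b_r],[c₁,…,c_s]) ↦ ([2, b₁,…,b_r],[c₁+1, c₂,…,c_s]); conversely, every pair obtained from ([2],[2]) by such steps is a conjugate pair. -/

import Mathlib

/-- The value of the Hirzebruch–Jung continued fraction
`[b₁,…,b_r] = b₁ − 1/(b₂ − 1/(⋯ − 1/b_r))`.
(For the empty list we set the value to `0`; since `1/0 = 0` in `ℚ`, the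
recursion then gives the correct value `b_r` for singleton lists.) -/
def hjValue : List ℤ → ℚ
  | [] => 0
  | b :: l => (b : ℚ) - 1 / hjValue l

/-- A string is a nonempty list of integers, each at least `2`. -/
def IsString (l : List ℤ) : Prop := l ≠ [] ∧ ∀ b ∈ l, 2 ≤ b

/-- Two strings are conjugate if their Hirzebruch–Jung continued fraction
values are `n/a` and `n/(n−a)` for some integers `0 < a < n` with
`gcd(a,n) = 1`. -/
def Conjugate (l l' : List ℤ) : Prop :=
  ∃ n a : ℤ, 0 < a ∧ a < n ∧ IsCoprime a n ∧
    hjValue l = (n : ℚ) / (a : ℚ) ∧ hjValue l' = (n : ℚ) / ((n : ℚ) - (a : ℚ))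

/-- One step in the construction of conjugate pairs of strings: either add `1`
to the first entry of the first string and prepend `2` to the second string,
or vice versa. -/
def StepPair (p q : List ℤ × List ℤ) : Prop :=
  (∃ b bs cs, p = (b :: bs, cs) ∧ q = ((b + 1) :: bs, 2 :: cs)) ∨
  (∃ bs c cs, p = (bs, c :: cs) ∧ q = (2 :: bs, (c + 1) :: cs))

lemma hjValue_cons (b : ℤ) (l : List ℤ) : hjValue (b :: l) = (b:ℚ) - 1 / hjValue l := rfl

lemma hjValue_singleton (b : ℤ) : hjValue [b] = (b:ℚ) := by
  simp [hjValue]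

lemma isString_tail {b : ℤ} {bs : List ℤ} (h : IsString (b::bs)) (hne : bs ≠ []) : IsString bs :=
  ⟨hne, fun x hx => h.2 x (List.mem_cons_of_mem _ hx)⟩

lemma one_lt_hjValue : ∀ {l : List ℤ}, IsString l → 1 < hjValue l := by
  intro l
  induction l with
  | nil => intro h; exact absurd rfl h.1
  | cons b bs ih =>
    intro h
    have hb : (2:ℤ) ≤ b := h.2 b (List.mem_cons_self)
    have hb' : (2:ℚ) ≤ (b:ℚ) := by exact_mod_cast hb
    rcases eq_or_ne bs [] with rfl | hne
    · rw [hjValue_singleton]; linarith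
    · have h1 : 1 < hjValue bs := ih (isString_tail h hne)
      have : 1 / hjValue bs < 1 := by
        rw [div_lt_one (by linarith)]; linarith
      have h0 : 0 < 1 / hjValue bs := by positivity
      rw [hjValue_cons]; linarith

lemma hjValue_lt_head {b : ℤ} {bs : List ℤ} (h : IsString (b::bs)) (hne : bs ≠ []) :
    (b:ℚ) - 1 < hjValue (b::bs) ∧ hjValue (b::bs) < (b:ℚ) := by
  have h1 : 1 < hjValue bs := one_lt_hjValue (isString_tail h hne)
  have hlt : 1 / hjValue bs < 1 := by rw [div_lt_one (by linarith)]; linarith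
  have h0 : 0 < 1 / hjValue bs := by positivity
  rw [hjValue_cons]; constructor <;> linarith

lemma conjugate_iff {l l' : List ℤ} (h : IsString l) :
    Conjugate l l' ↔ hjValue l' = hjValue l / (hjValue l - 1) := by
  constructor
  · rintro ⟨n, a, ha, han, -, hx, hy⟩
    have ha' : (0:ℚ) < (a:ℚ) := by exact_mod_cast ha
    have han' : (a:ℚ) < (n:ℚ) := by exact_mod_cast han
    rw [hx, hy]
    field_simp
  · intro hy
    have hx1 : 1 < hjValue l := one_lt_hjValue h
    obtain ⟨n, d, hd, hnd, hdn, hcop⟩ :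
        ∃ n d : ℤ, 0 < d ∧ hjValue l = (n:ℚ)/(d:ℚ) ∧ d < n ∧ IsCoprime d n := by
      set x := hjValue l with hxdef
      refine ⟨x.num, (x.den:ℤ), by exact_mod_cast x.pos, by push_cast; exact (Rat.num_div_den x).symm, ?_, ?_⟩
      · by_contra hc
        push_neg at hc
        have hxle : x ≤ 1 := by
          have : (x.num:ℚ)/(x.den:ℚ) ≤ 1 := by
            rw [div_le_one (by exact_mod_cast x.pos)]
            exact_mod_cast hc
          rwa [Rat.num_div_den x] at this
        linarith
      · rw [Int.isCoprime_iff_gcd_eq_one]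
        simpa [Int.gcd, Nat.coprime_comm] using x.reduced
    have hd' : (0:ℚ) < (d:ℚ) := by exact_mod_cast hd
    have hdn' : (d:ℚ) < (n:ℚ) := by exact_mod_cast hdn
    refine ⟨n, d, hd, hdn, hcop, hnd, ?_⟩
    rw [hy]
    have hnum : (n:ℚ) - (d:ℚ) ≠ 0 := by linarith
    have hx0 : hjValue l - 1 ≠ 0 := by linarith
    rw [div_eq_div_iff hx0 hnum, hnd]
    field_simp

def GoodPair (p : List ℤ × List ℤ) : Prop :=
  IsString p.1 ∧ IsString p.2 ∧ hjValue p.2 = hjValue p.1 / (hjValue p.1 - 1)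

lemma hjValue_add_one (b : ℤ) (bs : List ℤ) :
    hjValue ((b + 1) :: bs) = hjValue (b :: bs) + 1 := by
  simp only [hjValue_cons]; push_cast; ring

lemma isString_cons {b : ℤ} {bs : List ℤ} (hb : 2 ≤ b) (h : ∀ x ∈ bs, 2 ≤ x) :
    IsString (b :: bs) := by
  refine ⟨by simp, ?_⟩
  intro x hx
  rcases List.mem_cons.mp hx with rfl | hx
  · exact hb
  · exact h x hx

lemma step_preserves {p q : List ℤ × List ℤ} (hp : GoodPair p) (h : StepPair p q) :
    GoodPair q := by
  obtain ⟨h1, h2, hrel⟩ := hp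
  rcases h with ⟨b, bs, cs, rfl, rfl⟩ | ⟨bs, c, cs, rfl, rfl⟩
  · simp only at h1 h2 hrel ⊢
    have hb : (2:ℤ) ≤ b := h1.2 b (List.mem_cons_self)
    have hx1 : 1 < hjValue (b :: bs) := one_lt_hjValue h1
    have hy1 : 1 < hjValue cs := one_lt_hjValue h2
    refine ⟨isString_cons (by omega) (fun x hx => h1.2 x (List.mem_cons_of_mem _ hx)), ?_, ?_⟩
    · exact isString_cons le_rfl h2.2
    · rw [hjValue_add_one, hjValue_cons, hrel]
      have h0 : hjValue (b :: bs) ≠ 0 := by linarith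
      have h0' : hjValue (b :: bs) - 1 ≠ 0 := by linarith
      have h0'' : hjValue (b :: bs) + 1 ≠ 0 := by linarith
      field_simp
      rw [add_sub_cancel_right, mul_div_cancel_left₀ _ h0]; push_cast; ring
  · simp only at h1 h2 hrel ⊢
    have hc : (2:ℤ) ≤ c := h2.2 c (List.mem_cons_self)
    have hx1 : 1 < hjValue bs := one_lt_hjValue h1
    have hy1 : 1 < hjValue (c :: cs) := one_lt_hjValue h2
    refine ⟨isString_cons le_rfl h1.2, ?_, ?_⟩
    · exact isString_cons (by omega) (fun x hx => h2.2 x (List.mem_cons_of_mem _ hx))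
    · show hjValue ((c + 1) :: cs) = hjValue (2 :: bs) / (hjValue (2 :: bs) - 1)
      rw [hjValue_add_one, hrel, hjValue_cons 2 bs]
      have h0 : hjValue bs ≠ 0 := by linarith
      have h0' : hjValue bs - 1 ≠ 0 := by linarith
      have h0'' : (2:ℚ) - 1 / hjValue bs - 1 ≠ 0 := by
        have : 1 / hjValue bs < 1 := by rw [div_lt_one (by linarith)]; linarith
        linarith
      push_cast
      have key : ((2:ℚ) - 1 / hjValue bs) / (2 - 1 / hjValue bs - 1)
          = (2 * hjValue bs - 1) / (hjValue bs - 1) := by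
        rw [div_eq_div_iff h0'' h0']
        field_simp
        ring
      rw [key]
      rw [div_add' _ _ _ h0', div_eq_div_iff h0' h0']
      ring

lemma sum_ge_two {l : List ℤ} (h : IsString l) : 2 ≤ l.sum := by
  obtain ⟨hne, hall⟩ := h
  rcases l with _ | ⟨b, bs⟩
  · exact absurd rfl hne
  · have hb := hall b (List.mem_cons_self)
    have hbs : 0 ≤ bs.sum :=
      List.sum_nonneg fun x hx => by
        have := hall x (List.mem_cons_of_mem _ hx); linarith
    rw [List.sum_cons]; linarith

lemma reach : ∀ n : ℕ, ∀ p : List ℤ × List ℤ, (p.1.sum + p.2.sum).toNat ≤ n →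
    GoodPair p → Relation.ReflTransGen StepPair ([2], [2]) p := by
  intro n
  induction n with
  | zero =>
    rintro ⟨l, l'⟩ hm ⟨h1, h2, -⟩
    exfalso
    have s1 := sum_ge_two h1
    have s2 := sum_ge_two h2
    simp only at hm s1 s2
    omega
  | succ n ih =>
    rintro ⟨l, l'⟩ hm ⟨h1, h2, hrel⟩
    rcases l with _ | ⟨b, bs⟩; · exact absurd rfl h1.1
    rcases l' with _ | ⟨c, cs⟩; · exact absurd rfl h2.1
    simp only at hm hrel ⊢
    have hb : (2:ℤ) ≤ b := h1.2 b (List.mem_cons_self)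
    have hc : (2:ℤ) ≤ c := h2.2 c (List.mem_cons_self)
    have hx1 : 1 < hjValue (b :: bs) := one_lt_hjValue h1
    have hy1 : 1 < hjValue (c :: cs) := one_lt_hjValue h2
    rcases lt_trichotomy (hjValue (b :: bs)) 2 with hx2 | hx2 | hx2
    -- case x < 2 : predecessor (bs, (c-1)::cs)
    · have hbs : bs ≠ [] := by
        intro hbe; subst hbe
        rw [hjValue_singleton] at hx2
        have : b < 2 := by exact_mod_cast hx2
        omega
      have hlt := hjValue_lt_head h1 hbs
      have hb2 : b = 2 := by
        have : (b:ℚ) - 1 < 2 := lt_trans hlt.1 hx2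
        have : b < 3 := by exact_mod_cast (by linarith : (b:ℚ) < 3)
        omega
      have hy2 : 2 < hjValue (c :: cs) := by
        rw [hrel, lt_div_iff₀ (by linarith)]; linarith
      have hc3 : 3 ≤ c := by
        rcases eq_or_ne cs [] with rfl | hcs
        · rw [hjValue_singleton] at hy2
          exact_mod_cast (by exact_mod_cast hy2 : (2:ℤ) < c)
        · have := (hjValue_lt_head h2 hcs).2
          have : (2:ℚ) < c := lt_trans hy2 this
          exact_mod_cast (by exact_mod_cast this : (2:ℤ) < c)
      have hbs_str : IsString bs := isString_tail h1 hbs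
      have hu1 : 1 < hjValue bs := one_lt_hjValue hbs_str
      have hq_str2 : IsString ((c - 1) :: cs) :=
        isString_cons (by omega) (fun x hx => h2.2 x (List.mem_cons_of_mem _ hx))
      -- value of ((c-1)::cs) is y - 1
      have hshift : hjValue ((c - 1) :: cs) = hjValue (c :: cs) - 1 := by
        have := hjValue_add_one (c - 1) cs
        rw [sub_add_cancel] at this
        linarith
      -- x = 2 - 1 / u
      have hxu : hjValue (b :: bs) = 2 - 1 / hjValue bs := by
        rw [hjValue_cons, hb2]; norm_num
      have hu0 : hjValue bs ≠ 0 := by linarith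
      have h2x : (2:ℚ) - hjValue (b :: bs) ≠ 0 := by linarith
      have hu : hjValue bs = 1 / (2 - hjValue (b :: bs)) := by
        rw [eq_div_iff h2x]
        field_simp [hu0] at hxu ⊢
        linarith
      have hqrel : hjValue ((c - 1) :: cs) = hjValue bs / (hjValue bs - 1) := by
        rw [hshift, hrel, hu]
        have hx0 : hjValue (b :: bs) ≠ 0 := by linarith
        have hx0' : hjValue (b :: bs) - 1 ≠ 0 := by linarith
        have h1u : (1:ℚ) / (2 - hjValue (b :: bs)) - 1 ≠ 0 := by
          rw [hu] at hu1; intro hcon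
          have : (1:ℚ) / (2 - hjValue (b :: bs)) = 1 := by linarith
          linarith [this ▸ hu1]
        rw [div_sub' hx0', div_eq_div_iff hx0' h1u]
        field_simp
        ring
      have hgq : GoodPair (bs, (c - 1) :: cs) := ⟨hbs_str, hq_str2, hqrel⟩
      have hmq : ((bs.sum + ((c - 1) :: cs).sum).toNat) ≤ n := by
        have s1 := sum_ge_two hbs_str
        have s2 : 0 ≤ cs.sum := List.sum_nonneg fun x hx => by
          have := h2.2 x (List.mem_cons_of_mem _ hx); linarith
        simp only [List.sum_cons] at hm ⊢
        omega
      have hstep : StepPair (bs, (c - 1) :: cs) (b :: bs, c :: cs) := by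
        right
        refine ⟨bs, c - 1, cs, rfl, ?_⟩
        rw [sub_add_cancel, hb2]
      exact (ih _ hmq hgq).tail hstep
    -- case x = 2 : base pair
    · have hbs : bs = [] := by
        by_contra hbe
        have hlt := hjValue_lt_head h1 hbe
        rw [hx2] at hlt
        have hb3 : (2:ℚ) < b := hlt.2
        have : (b:ℚ) - 1 < 2 := hlt.1
        have h1' : 2 < b := by exact_mod_cast hb3
        have h2' : b < 3 := by exact_mod_cast (by linarith : (b:ℚ) < 3)
        omega
      subst hbs
      rw [hjValue_singleton] at hx2
      have hb2 : b = 2 := by exact_mod_cast hx2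
      have hy2 : hjValue (c :: cs) = 2 := by
        rw [hrel, hjValue_singleton, hx2]
        norm_num
      have hcs : cs = [] := by
        by_contra hce
        have hlt := hjValue_lt_head h2 hce
        rw [hy2] at hlt
        have h1' : 2 < c := by exact_mod_cast hlt.2
        have h2' : c < 3 := by exact_mod_cast (by linarith [hlt.1] : (c:ℚ) < 3)
        omega
      subst hcs
      rw [hjValue_singleton] at hy2
      have hc2 : c = 2 := by exact_mod_cast hy2
      subst hb2; subst hc2
      exact Relation.ReflTransGen.refl
    -- case x > 2 : predecessor ((b-1)::bs, cs)
    · have hy2 : hjValue (c :: cs) < 2 := by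
        rw [hrel, div_lt_iff₀ (by linarith)]; linarith
      have hcs : cs ≠ [] := by
        intro hce; subst hce
        rw [hjValue_singleton] at hy2
        have : c < 2 := by exact_mod_cast hy2
        omega
      have hltc := hjValue_lt_head h2 hcs
      have hc2 : c = 2 := by
        have : (c:ℚ) - 1 < 2 := lt_trans hltc.1 hy2
        have : c < 3 := by exact_mod_cast (by linarith : (c:ℚ) < 3)
        omega
      have hb3 : 3 ≤ b := by
        rcases eq_or_ne bs [] with rfl | hbe
        · rw [hjValue_singleton] at hx2
          exact_mod_cast (by exact_mod_cast hx2 : (2:ℤ) < b)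
        · have := (hjValue_lt_head h1 hbe).2
          have : (2:ℚ) < b := lt_trans hx2 this
          exact_mod_cast (by exact_mod_cast this : (2:ℤ) < b)
      have hcs_str : IsString cs := isString_tail h2 hcs
      have hv1 : 1 < hjValue cs := one_lt_hjValue hcs_str
      have hq_str1 : IsString ((b - 1) :: bs) :=
        isString_cons (by omega) (fun x hx => h1.2 x (List.mem_cons_of_mem _ hx))
      have hshift : hjValue ((b - 1) :: bs) = hjValue (b :: bs) - 1 := by
        have := hjValue_add_one (b - 1) bs
        rw [sub_add_cancel] at this
        linarith
      -- y = 2 - 1 / v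
      have hyv : hjValue (c :: cs) = 2 - 1 / hjValue cs := by
        rw [hjValue_cons, hc2]; norm_num
      have hv0 : hjValue cs ≠ 0 := by linarith
      have h2y : (2:ℚ) - hjValue (c :: cs) ≠ 0 := by linarith
      have hv : hjValue cs = 1 / (2 - hjValue (c :: cs)) := by
        rw [eq_div_iff h2y]
        field_simp [hv0] at hyv ⊢
        linarith
      have hqrel : hjValue cs
          = hjValue ((b - 1) :: bs) / (hjValue ((b - 1) :: bs) - 1) := by
        rw [hshift, hv, hrel]
        have hx0 : hjValue (b :: bs) ≠ 0 := by linarith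
        have hx0' : hjValue (b :: bs) - 1 ≠ 0 := by linarith
        have hx0'' : hjValue (b :: bs) - 2 ≠ 0 := by linarith
        have hden : (2:ℚ) - hjValue (b :: bs) / (hjValue (b :: bs) - 1) ≠ 0 := by
          rw [sub_ne_zero]
          intro hcon
          have := hcon.symm
          rw [div_eq_iff hx0'] at this
          have : hjValue (b :: bs) = 2 := by linarith
          linarith
        field_simp
        ring
      have hgq : GoodPair ((b - 1) :: bs, cs) := ⟨hq_str1, hcs_str, hqrel⟩
      have hmq : ((((b - 1) :: bs).sum + cs.sum).toNat) ≤ n := by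
        have s2 := sum_ge_two hcs_str
        have s1 : 0 ≤ bs.sum := List.sum_nonneg fun x hx => by
          have := h1.2 x (List.mem_cons_of_mem _ hx); linarith
        simp only [List.sum_cons] at hm ⊢
        omega
      have hstep : StepPair ((b - 1) :: bs, cs) (b :: bs, c :: cs) := by
        left
        refine ⟨b - 1, bs, cs, rfl, ?_⟩
        rw [sub_add_cancel, hc2]
      exact (ih _ hmq hgq).tail hstep

/-- A pair of strings is conjugate if and only if it is obtained from the pair
`([2],[2])` by a finite sequence of the two steps
`([b₁,…,b_r],[c₁,…,c_s]) ↦ ([b₁+1, b₂,…,b_r],[2, c₁,…,c_s])` and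
`([b₁,…,b_r],[c₁,…,c_s]) ↦ ([2, b₁,…,b_r],[c₁+1, c₂,…,c_s])`. -/
theorem stmt_13 (p : List ℤ × List ℤ) :
    (IsString p.1 ∧ IsString p.2 ∧ Conjugate p.1 p.2) ↔
      Relation.ReflTransGen StepPair ([2], [2]) p := by
  constructor
  · rintro ⟨h1, h2, hconj⟩
    exact reach _ p le_rfl ⟨h1, h2, (conjugate_iff h1).mp hconj⟩
  · intro h
    have hg : GoodPair p := by
      induction h with
      | refl =>
        refine ⟨⟨by simp, by simp⟩, ⟨by simp, by simp⟩, ?_⟩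
        norm_num [hjValue]
      | tail _ hstep ih => exact step_preserves ih hstep
    exact ⟨hg.1, hg.2.1, (conjugate_iff hg.1).mpr hg.2.2⟩
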